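/- Let F be a finite family of finite sets that satisfies the running intersection property (i.e., some running intersection ordering of F exists). Then for every set S ∈ F there exists a running intersection ordering of F whose first element is S. -/

import Mathlib

/-- `S` is a running intersection ordering: for every index `a ≥ 1` there is an earlier
index `b` such that `S a ∩ (⋃_{c < a} S c) ⊆ S b`. -/
def IsRIO {α : Type*} [DecidableEq α] {n : ℕ} (S : Fin n → Finset α) : Prop :=
  ∀ a : Fin n, 0 < (a : ℕ) → ∃ b : Fin n, (b : ℕ) < (a : ℕ) ∧
    S a ∩ (Finset.univ.filter (fun c : Fin n => (c : ℕ) < (a : ℕ))).biUnion S ⊆ S b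

private lemma mem_rio_union {α : Type*} [DecidableEq α] {n : ℕ} (S : Fin n → Finset α)
    (k : ℕ) (x : α) :
    x ∈ (Finset.univ.filter (fun c : Fin n => (c : ℕ) < k)).biUnion S ↔
      ∃ c : Fin n, (c : ℕ) < k ∧ x ∈ S c := by
  simp [Finset.mem_biUnion, Finset.mem_filter]

private lemma rio_aux {α : Type*} [DecidableEq α] :
    ∀ n : ℕ, ∀ S : Fin n → Finset α, Function.Injective S → IsRIO S →
    ∀ T ∈ Finset.image S Finset.univ, ∀ hn : 0 < n,
    ∃ S' : Fin n → Finset α, Function.Injective S' ∧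
      Finset.image S' Finset.univ = Finset.image S Finset.univ ∧ IsRIO S' ∧ S' ⟨0, hn⟩ = T := by
  intro n
  induction n with
  | zero => intro _ _ _ _ _ hn; exact absurd hn (by omega)
  | succ m ih =>
    intro S hinj hrip T hT hn
    rcases Nat.eq_zero_or_pos m with hm | hm
    · subst hm
      refine ⟨S, hinj, rfl, hrip, ?_⟩
      obtain ⟨i, _, hi⟩ := Finset.mem_image.mp hT
      have : i = ⟨0, hn⟩ := by ext; omega
      rw [← this]; exact hi
    · -- m ≥ 1 : peel off the last set
      set Sr : Fin m → Finset α := S ∘ Fin.castSucc with hSr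
      have hinjr : Function.Injective Sr := hinj.comp (Fin.castSucc_injective m)
      have hripr : IsRIO Sr := by
        intro a ha
        obtain ⟨b, hb, hsub⟩ := hrip (Fin.castSucc a) (by simpa using ha)
        have hbm : (b : ℕ) < m := lt_trans (by simpa using hb) a.isLt
        refine ⟨⟨b, hbm⟩, by simpa using hb, ?_⟩
        intro x hx
        rw [Finset.mem_inter] at hx
        obtain ⟨hx1, hx2⟩ := hx
        rw [mem_rio_union] at hx2
        obtain ⟨c, hc, hxc⟩ := hx2
        have hmem : x ∈ S (Fin.castSucc a) ∩
            (Finset.univ.filter (fun c : Fin (m+1) =>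
              (c : ℕ) < ((Fin.castSucc a : Fin (m+1)) : ℕ))).biUnion S := by
          rw [Finset.mem_inter, mem_rio_union]
          exact ⟨hx1, ⟨Fin.castSucc c, by simpa using hc, hxc⟩⟩
        have hxb := hsub hmem
        have hcs : Fin.castSucc (⟨b, hbm⟩ : Fin m) = b := by ext; simp
        simpa [hSr, hcs] using hxb
      have hnotmem : S (Fin.last m) ∉ Finset.image Sr Finset.univ := by
        rw [Finset.mem_image]
        rintro ⟨i, -, hi⟩
        have := hinj hi.symm
        exact absurd (congrArg Fin.val this) (by simp [Fin.castSucc]; omega)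
      have himg : Finset.image S Finset.univ
          = insert (S (Fin.last m)) (Finset.image Sr Finset.univ) := by
        ext y
        simp only [Finset.mem_insert, Finset.mem_image, Finset.mem_univ, true_and]
        constructor
        · rintro ⟨i, rfl⟩
          exact Fin.lastCases (motive := fun i => S i = S (Fin.last m) ∨ ∃ j, Sr j = S i)
            (Or.inl rfl) (fun j => Or.inr ⟨j, rfl⟩) i
        · rintro (h | ⟨j, hj⟩)
          · exact ⟨Fin.last m, h.symm⟩
          · exact ⟨Fin.castSucc j, hj⟩
      -- the witness for the last index in the old ordering
      obtain ⟨b, hbm, hsubL⟩ := hrip (Fin.last m) (by simpa using hm)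
      have hbm' : (b : ℕ) < m := by simpa using hbm
      have hbmem : S b ∈ Finset.image Sr Finset.univ := by
        rw [Finset.mem_image]
        refine ⟨⟨b, hbm'⟩, Finset.mem_univ _, ?_⟩
        have hc : Fin.castSucc (⟨(b : ℕ), hbm'⟩ : Fin m) = b := by ext; simp
        rw [hSr]
        simp only [Function.comp_apply, hc]
      by_cases hTL : T = S (Fin.last m)
      · -- put the last set first, then a RIO of the rest starting at S b
        obtain ⟨S'', hinj'', himg'', hrip'', h0''⟩ := ih Sr hinjr hripr (S b) hbmem hm
        have key : ∀ j' : Fin m, S'' j' ≠ S (Fin.last m) := by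
          intro j' h
          apply hnotmem
          rw [← himg'']
          exact Finset.mem_image.mpr ⟨j', Finset.mem_univ _, h⟩
        refine ⟨Fin.cons (S (Fin.last m)) S'', ?_, ?_, ?_, ?_⟩
        · intro i j hij
          induction i using Fin.cases with
          | zero =>
            induction j using Fin.cases with
            | zero => rfl
            | succ j' =>
              rw [Fin.cons_zero, Fin.cons_succ] at hij
              exact absurd hij.symm (key j')
          | succ i' =>
            induction j using Fin.cases with
            | zero =>
              rw [Fin.cons_zero, Fin.cons_succ] at hij
              exact absurd hij (key i')
            | succ j' =>
              rw [Fin.cons_succ, Fin.cons_succ] at hij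
              exact congrArg Fin.succ (hinj'' hij)
        · rw [himg, ← himg'']
          ext y
          simp only [Finset.mem_insert, Finset.mem_image, Finset.mem_univ, true_and]
          constructor
          · rintro ⟨i, rfl⟩
            refine Fin.cases ?_ (fun j => ?_) i
            · exact Or.inl (by rw [Fin.cons_zero])
            · exact Or.inr ⟨j, by rw [Fin.cons_succ]⟩
          · rintro (rfl | ⟨j, rfl⟩)
            · exact ⟨0, by rw [Fin.cons_zero]⟩
            · exact ⟨j.succ, by rw [Fin.cons_succ]⟩
        · -- IsRIO for the cons ordering
          intro a ha
          induction a using Fin.cases with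
          | zero => exact absurd ha (by simp)
          | succ a' =>
            rcases Nat.eq_zero_or_pos (a' : ℕ) with ha0 | ha0
            · -- second position: everything before is just the first set
              refine ⟨0, by simp, ?_⟩
              intro x hx
              rw [Finset.mem_inter] at hx
              obtain ⟨-, hx2⟩ := hx
              rw [mem_rio_union] at hx2
              obtain ⟨c, hc, hxc⟩ := hx2
              have : c = 0 := by ext; rw [Fin.val_succ] at hc; rw [Fin.val_zero]; omega
              rwa [this] at hxc
            · -- later positions
              obtain ⟨b'', hb'', hsub''⟩ := hrip'' a' ha0
              refine ⟨b''.succ, by simp; omega, ?_⟩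
              intro x hx
              rw [Finset.mem_inter] at hx
              obtain ⟨hx1, hx2⟩ := hx
              rw [Fin.cons_succ] at hx1
              rw [mem_rio_union] at hx2
              obtain ⟨c, hc, hxc⟩ := hx2
              have hgoal : x ∈ S'' b'' := by
                apply hsub''
                rw [Finset.mem_inter, mem_rio_union]
                refine ⟨hx1, ?_⟩
                refine Fin.cases ?_ (fun c' hc' hxc' => ?_) c hc hxc
                · -- x came from the first set S (last m)
                  intro _ hx0
                  rw [Fin.cons_zero] at hx0
                  -- S'' a' is some S (castSucc d), so x is in the old union before last
                  have : S'' a' ∈ Finset.image Sr Finset.univ := by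
                    rw [← himg'']
                    exact Finset.mem_image.mpr ⟨a', Finset.mem_univ _, rfl⟩
                  obtain ⟨d, -, hd⟩ := Finset.mem_image.mp this
                  have hxSb : x ∈ S b := by
                    apply hsubL
                    rw [Finset.mem_inter, mem_rio_union]
                    refine ⟨hx0, ⟨Fin.castSucc d, by simp, ?_⟩⟩
                    have hd' : S (Fin.castSucc d) = S'' a' := hd
                    rw [hd']
                    exact hx1
                  refine ⟨⟨0, hm⟩, by simp; omega, ?_⟩
                  have hb0 : S'' ⟨0, hm⟩ = S b := by
                    have : (⟨0, hm⟩ : Fin m) = ⟨0, hm⟩ := rfl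
                    exact h0''
                  rw [hb0]; exact hxSb
                · -- x came from a later set S'' c'
                  rw [Fin.cons_succ] at hxc'
                  exact ⟨c', by simp at hc'; omega, hxc'⟩
              rw [Fin.cons_succ]
              exact hgoal
        · rw [show (⟨0, hn⟩ : Fin (m+1)) = 0 from rfl, Fin.cons_zero, hTL]
      · -- T is not the last set: recurse, then append the last set
        have hTmem : T ∈ Finset.image Sr Finset.univ := by
          rw [himg, Finset.mem_insert] at hT
          tauto
        obtain ⟨S'', hinj'', himg'', hrip'', h0''⟩ := ih Sr hinjr hripr T hTmem hm
        have key : ∀ j' : Fin m, S'' j' ≠ S (Fin.last m) := by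
          intro j' h
          apply hnotmem
          rw [← himg'']
          exact Finset.mem_image.mpr ⟨j', Finset.mem_univ _, h⟩
        refine ⟨Fin.snoc S'' (S (Fin.last m)), ?_, ?_, ?_, ?_⟩
        · intro i j hij
          induction i using Fin.lastCases with
          | last =>
            induction j using Fin.lastCases with
            | last => rfl
            | cast j' =>
              rw [Fin.snoc_last, Fin.snoc_castSucc] at hij
              exact absurd hij.symm (key j')
          | cast i' =>
            induction j using Fin.lastCases with
            | last =>
              rw [Fin.snoc_castSucc, Fin.snoc_last] at hij
              exact absurd hij (key i')
            | cast j' =>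
              rw [Fin.snoc_castSucc, Fin.snoc_castSucc] at hij
              exact congrArg Fin.castSucc (hinj'' hij)
        · rw [himg, ← himg'']
          ext y
          simp only [Finset.mem_insert, Finset.mem_image, Finset.mem_univ, true_and]
          constructor
          · rintro ⟨i, rfl⟩
            refine Fin.lastCases ?_ (fun j => ?_) i
            · exact Or.inl (by rw [Fin.snoc_last])
            · exact Or.inr ⟨j, by rw [Fin.snoc_castSucc]⟩
          · rintro (rfl | ⟨j, rfl⟩)
            · exact ⟨Fin.last m, by rw [Fin.snoc_last]⟩
            · exact ⟨Fin.castSucc j, by rw [Fin.snoc_castSucc]⟩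
        · -- IsRIO for the snoc ordering
          intro a ha
          induction a using Fin.lastCases with
          | last =>
            -- last position: use the old witness b (as an element of the new family)
            obtain ⟨j, -, hj⟩ := Finset.mem_image.mp (himg'' ▸ hbmem)
            refine ⟨Fin.castSucc j, by simp, ?_⟩
            intro x hx
            rw [Finset.mem_inter] at hx
            obtain ⟨hx1, hx2⟩ := hx
            rw [Fin.snoc_last] at hx1
            rw [mem_rio_union] at hx2
            obtain ⟨c, hc, hxc⟩ := hx2
            simp only [Fin.val_last] at hc
            have hc' : c = Fin.castSucc ⟨(c : ℕ), hc⟩ := by ext; simp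
            rw [hc', Fin.snoc_castSucc] at hxc
            have : S'' ⟨(c : ℕ), hc⟩ ∈ Finset.image Sr Finset.univ := by
              rw [← himg'']
              exact Finset.mem_image.mpr ⟨_, Finset.mem_univ _, rfl⟩
            obtain ⟨d, -, hd⟩ := Finset.mem_image.mp this
            have hxSb : x ∈ S b := by
              apply hsubL
              rw [Finset.mem_inter, mem_rio_union]
              refine ⟨hx1, ⟨Fin.castSucc d, by simp, ?_⟩⟩
              have hd' : S (Fin.castSucc d) = S'' ⟨(c : ℕ), hc⟩ := hd
              rw [hd']
              exact hxc
            rw [Fin.snoc_castSucc, hj]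
            exact hxSb
          | cast a' =>
            -- earlier positions: same as in the recursive ordering
            have ha'' : 0 < (a' : ℕ) := by simpa using ha
            obtain ⟨b'', hb'', hsub''⟩ := hrip'' a' ha''
            refine ⟨Fin.castSucc b'', by simpa using hb'', ?_⟩
            intro x hx
            rw [Finset.mem_inter] at hx
            obtain ⟨hx1, hx2⟩ := hx
            rw [Fin.snoc_castSucc] at hx1
            rw [mem_rio_union] at hx2
            obtain ⟨c, hc, hxc⟩ := hx2
            simp only [Fin.coe_castSucc] at hc
            have hcm : (c : ℕ) < m := lt_trans hc a'.isLt
            have hc' : c = Fin.castSucc ⟨(c : ℕ), hcm⟩ := by ext; simp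
            rw [hc', Fin.snoc_castSucc] at hxc
            rw [Fin.snoc_castSucc]
            apply hsub''
            rw [Finset.mem_inter, mem_rio_union]
            exact ⟨hx1, ⟨⟨(c : ℕ), hcm⟩, hc, hxc⟩⟩
        · rw [show (⟨0, hn⟩ : Fin (m+1)) = Fin.castSucc ⟨0, hm⟩ from by ext; simp,
            Fin.snoc_castSucc, h0'']

/-- If the finite family `F` of finite sets has a running intersection ordering, then
for every `T₀ ∈ F` there is a running intersection ordering of `F` starting with `T₀`. -/
theorem stmt2 {α : Type*} [DecidableEq α] (F : Finset (Finset α)) {n : ℕ} (hn : 0 < n)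
    (S : Fin n → Finset α) (hinj : Function.Injective S)
    (hrange : Finset.image S Finset.univ = F) (hrip : IsRIO S)
    (T₀ : Finset α) (hT₀ : T₀ ∈ F) :
    ∃ S' : Fin n → Finset α, Function.Injective S' ∧
      Finset.image S' Finset.univ = F ∧ IsRIO S' ∧ S' ⟨0, hn⟩ = T₀ := by
  subst hrange
  exact rio_aux n S hinj hrip T₀ hT₀ hn
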